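/- Let C = {x ∈ ℝⁿ : Σᵢ xᵢ = K, 0 ≤ x ≤ 1} be nonempty. Then for any x ∈ ℝⁿ, the orthogonal projection of x onto C equals P_{[0,1]}(x − μ̄·1), where P_{[0,1]} is the componentwise clipping to [0,1], i.e., (P_{[0,1]}(v))ᵢ = min(max(vᵢ,0),1), and μ̄ ∈ ℝ satisfies Σᵢ min(max(xᵢ − μ̄, 0), 1) = K. -/

import Mathlib

/-- Projection onto the intersection of the hyperplane `Σᵢ zᵢ = K` and the box
`[0,1]ⁿ` is componentwise clipping of `x − μ̄·1`, where `μ̄` is chosen so that the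
clipped vector sums to `K`. -/
theorem proj_hyperplane_box (n : ℕ) (K : ℝ) (hK0 : 0 ≤ K) (hKn : K ≤ n)
    (x : EuclideanSpace ℝ (Fin n)) (μ : ℝ)
    (hμ : (∑ i, min (max (x i - μ) 0) 1) = K) :
    let C : Set (EuclideanSpace ℝ (Fin n)) :=
      {z | (∑ i, z i) = K ∧ ∀ i, 0 ≤ z i ∧ z i ≤ 1}
    let zbar : EuclideanSpace ℝ (Fin n) := WithLp.toLp 2 (fun i => min (max (x i - μ) 0) 1)
    zbar ∈ C ∧ (∀ z ∈ C, ‖zbar - x‖ ≤ ‖z - x‖) ∧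
      ∀ z ∈ C, ‖z - x‖ = ‖zbar - x‖ → z = zbar := by
  intro C zbar
  have hzb : ∀ i : Fin n, zbar i = min (max (x i - μ) 0) 1 := fun i => rfl
  have hmem : zbar ∈ C := by
    refine ⟨hμ, fun i => ⟨?_, ?_⟩⟩
    · exact le_min (le_max_right _ _) zero_le_one
    · exact min_le_right _ _
  -- key componentwise inequality
  have hkey : ∀ (z : EuclideanSpace ℝ (Fin n)), (∀ i, 0 ≤ z i ∧ z i ≤ 1) →
      ∀ i : Fin n, μ * (zbar i - z i) ≤ (z i - zbar i) * (zbar i - x i) := by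
    intro z hz i
    obtain ⟨h0, h1⟩ := hz i
    rw [hzb i]
    rcases le_total (x i - μ) 0 with h | h
    · rw [max_eq_right h, min_eq_left zero_le_one]
      nlinarith
    · rw [max_eq_left h]
      rcases le_total 1 (x i - μ) with h' | h'
      · rw [min_eq_right h']
        nlinarith
      · rw [min_eq_left h']
        nlinarith
  -- the summed variational inequality
  have hS : ∀ z ∈ C, 0 ≤ ∑ i, (z i - zbar i) * (zbar i - x i) := by
    intro z hz
    have h1 : (0:ℝ) = ∑ i, μ * (zbar i - z i) := by
      rw [← Finset.mul_sum, Finset.sum_sub_distrib, hμ, hz.1, sub_self, mul_zero]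
    rw [h1]
    exact Finset.sum_le_sum fun i _ => hkey z hz.2 i
  have hns : ∀ v : EuclideanSpace ℝ (Fin n), ‖v‖ ^ 2 = ∑ i, v i ^ 2 := by
    intro v
    rw [EuclideanSpace.norm_eq, Real.sq_sqrt (Finset.sum_nonneg fun i _ => sq_nonneg _)]
    simp [Real.norm_eq_abs, sq_abs]
  have happ : ∀ (z : EuclideanSpace ℝ (Fin n)) (i : Fin n), (z - x) i = z i - x i :=
    fun z i => rfl
  have hexp : ∀ z ∈ C, ‖z - x‖ ^ 2 =
      (∑ i, (z i - zbar i) ^ 2) + 2 * (∑ i, (z i - zbar i) * (zbar i - x i))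
        + ‖zbar - x‖ ^ 2 := by
    intro z hz
    rw [hns, hns]
    simp only [happ]
    rw [Finset.mul_sum, ← Finset.sum_add_distrib, ← Finset.sum_add_distrib]
    exact Finset.sum_congr rfl fun i _ => by ring
  refine ⟨hmem, ?_, ?_⟩
  · intro z hz
    have := hexp z hz
    have h2 : ‖zbar - x‖ ^ 2 ≤ ‖z - x‖ ^ 2 := by
      have := hS z hz
      nlinarith [Finset.sum_nonneg (fun i (_ : i ∈ Finset.univ) => sq_nonneg (z i - zbar i))]
    nlinarith [norm_nonneg (z - x), norm_nonneg (zbar - x)]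
  · intro z hz heq
    have h2 : ‖z - x‖ ^ 2 = ‖zbar - x‖ ^ 2 := by rw [heq]
    have h3 : (∑ i, (z i - zbar i) ^ 2) + 2 * (∑ i, (z i - zbar i) * (zbar i - x i)) = 0 := by
      have := hexp z hz; linarith
    have h4 : (∑ i, (z i - zbar i) ^ 2) = 0 := by
      have := hS z hz
      have hnn : 0 ≤ ∑ i, (z i - zbar i) ^ 2 :=
        Finset.sum_nonneg fun i _ => sq_nonneg _
      linarith
    have h5 : ∀ i : Fin n, (z i - zbar i) ^ 2 = 0 := by
      intro i
      have := (Finset.sum_eq_zero_iff_of_nonneg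
        (fun i (_ : i ∈ Finset.univ) => sq_nonneg (z i - zbar i))).mp h4 i (Finset.mem_univ i)
      exact this
    ext i
    have := h5 i
    have : z i - zbar i = 0 := by nlinarith
    linarith
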